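/- (The Roller-Coaster Choice-Deferral Effect) If ρ is a decision-conflict logit with representation (u,D), then for all menus A, B with A ⊋ B and |B| ≥ 2, writing u(S) := ∑_{s∈S} u(s): ρ(o,A) ≤ ρ(o,B) if and only if (D(A) − D(B))/D(B) ≤ (u(A) − u(B))/u(B). -/

import Mathlib

open Finset

variable {X : Type*} [Fintype X] [DecidableEq X]

/-- The probability of choosing the outside option (deferring) at menu `A`. -/
noncomputable def defer (ρ : Finset X → X → ℝ) (A : Finset X) : ℝ :=
  1 - ∑ a ∈ A, ρ A a

/-- `ρ` is a random non-forced choice model on `X`. -/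
def IsRNFC (ρ : Finset X → X → ℝ) : Prop :=
  ∀ A : Finset X, A.Nonempty →
    (∀ a ∈ A, 0 ≤ ρ A a ∧ ρ A a ≤ 1) ∧
    (∀ a, a ∉ A → ρ A a = 0) ∧
    (∑ a ∈ A, ρ A a) ≤ 1

/-- `ρ` is a decision-conflict logit with representation `(u, D)`. -/
def IsDCL (ρ : Finset X → X → ℝ) (u : X → ℝ) (D : Finset X → ℝ) : Prop :=
  (∀ a, 0 < u a) ∧
  (∀ A : Finset X, A.Nonempty → 0 ≤ D A ∧ (D A = 0 ↔ A.card = 1)) ∧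
  (∀ A : Finset X, A.Nonempty → ∀ a ∈ A, ρ A a = u a / ((∑ b ∈ A, u b) + D A))

/-- The "roller-coaster" choice-deferral effect: upon menu expansion, deferral becomes
(weakly) less likely iff the percentage increase in total utility weakly exceeds the
percentage increase in decision complexity. -/
theorem stmt5 (ρ : Finset X → X → ℝ) (hρ : IsRNFC ρ)
    (u : X → ℝ) (D : Finset X → ℝ) (h : IsDCL ρ u D) :
    ∀ A B : Finset X, 2 ≤ B.card → B ⊂ A →
      (defer ρ A ≤ defer ρ B ↔
        (D A - D B) / D B ≤ ((∑ a ∈ A, u a) - ∑ b ∈ B, u b) / ∑ b ∈ B, u b) := by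
  obtain ⟨hu, hD, hρeq⟩ := h
  intro A B hB hBA
  have hBne : B.Nonempty := Finset.card_pos.mp (by omega)
  have hAne : A.Nonempty := hBne.mono hBA.subset
  have usum_pos : ∀ S : Finset X, S.Nonempty → 0 < ∑ b ∈ S, u b := fun S hS =>
    Finset.sum_pos (fun a _ => hu a) hS
  have hDA : 0 ≤ D A := (hD A hAne).1
  have hDB : 0 < D B := by
    rcases lt_or_eq_of_le (hD B hBne).1 with h' | h'
    · exact h'
    · have := (hD B hBne).2.mp h'.symm; omega
  have huA := usum_pos A hAne
  have huB := usum_pos B hBne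
  have hdenA : 0 < (∑ b ∈ A, u b) + D A := by linarith
  have hdenB : 0 < (∑ b ∈ B, u b) + D B := by linarith
  have key : ∀ S : Finset X, S.Nonempty → defer ρ S = D S / ((∑ b ∈ S, u b) + D S) := by
    intro S hS
    have hden : 0 < (∑ b ∈ S, u b) + D S := by
      have := usum_pos S hS; have := (hD S hS).1; linarith
    unfold defer
    rw [Finset.sum_congr rfl (fun a ha => hρeq S hS a ha), ← Finset.sum_div]
    field_simp
    ring
  rw [key A hAne, key B hBne, div_le_div_iff₀ hdenA hdenB,
    div_le_div_iff₀ hDB huB]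
  constructor <;> intro h' <;> nlinarith
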